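/- Let r ≥ 1, t ≥ 0 and 1 ≤ ρ ≤ r be integers with r + t + 1 ≤ m. Let S = {1, 2, …, r+t+1} ⊆ [m] and for i ∈ {0, 1, …, ρ−1} let S_i = S \ {r+t+1−i}, so each S_i has r + t elements. Then: (i) the number of distinct r-element subsets of [m] contained in at least one of S₀,…,S_{ρ−1} equals ∑_{i=0}^{ρ−1} C(r+t−i, r−i); and (ii) the number of distinct subsets of [m] of cardinality at least r contained in at least one of S₀,…,S_{ρ−1} equals ∑_{j=0}^{t} ∑_{i=0}^{ρ−1} C(r+t−i, r+j−i). -/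

import Mathlib

open Finset

private lemma count_k (m r t ρ k : ℕ) (hρr : ρ ≤ r) (hk : ρ ≤ k)
    (hm : r + t + 1 ≤ m) :
    ((Finset.Icc 1 m).powerset.filter (fun A => A.card = k ∧
        ∃ i ∈ Finset.range ρ, A ⊆ (Finset.Icc 1 (r + t + 1)).erase (r + t + 1 - i))).card
      = ∑ i ∈ Finset.range ρ, (r + t - i).choose (k - i) := by
  classical
  set N := r + t + 1 with hN
  set F : ℕ → Finset (Finset ℕ) := fun i =>
    (Finset.Icc 1 N).powerset.filter (fun A => A.card = k ∧
      N - i ∉ A ∧ Finset.Icc (N - i + 1) N ⊆ A) with hF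
  have hset : (Finset.Icc 1 m).powerset.filter (fun A => A.card = k ∧
        ∃ i ∈ Finset.range ρ, A ⊆ (Finset.Icc 1 N).erase (N - i))
      = (Finset.range ρ).biUnion F := by
    ext A
    simp only [mem_filter, mem_powerset, mem_biUnion, mem_range, hF]
    constructor
    · rintro ⟨_, hcard, i0, hi0, hsub0⟩
      have hAsub : A ⊆ Finset.Icc 1 N :=
        hsub0.trans (erase_subset _ _)
      have hex : ∃ i, N - i ∉ A := ⟨i0, fun h => (mem_erase.mp (hsub0 h)).1 rfl⟩
      set i := Nat.find hex with hi
      have hiN : N - i ∉ A := Nat.find_spec hex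
      have hile : i ≤ i0 := Nat.find_min' hex (fun h => (mem_erase.mp (hsub0 h)).1 rfl)
      refine ⟨i, lt_of_le_of_lt hile hi0, hAsub, hcard, hiN, ?_⟩
      intro a ha
      rw [mem_Icc] at ha
      have hlt : N - a < i := by omega
      have h2 : N - (N - a) ∈ A := not_not.mp (Nat.find_min hex hlt)
      have h3 : N - (N - a) = a := by omega
      rwa [h3] at h2
    · rintro ⟨i, hi, hAsub, hcard, hni, _⟩
      refine ⟨hAsub.trans (Finset.Icc_subset_Icc_right hm), hcard, i, hi, ?_⟩
      intro a ha
      exact mem_erase.mpr ⟨fun h => hni (h ▸ ha), hAsub ha⟩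
  rw [hset]
  have hdisj : ∀ i ∈ Finset.range ρ, ∀ j ∈ Finset.range ρ, i ≠ j →
      Disjoint (F i) (F j) := by
    have key : ∀ i j : ℕ, i < j → j < ρ → Disjoint (F i) (F j) := by
      intro i j hij hj
      rw [Finset.disjoint_left]
      rintro A hAi hAj
      simp only [hF, mem_filter, mem_powerset] at hAi hAj
      apply hAi.2.2.1
      apply hAj.2.2.2
      rw [mem_Icc]
      omega
    intro i hi j hj hne
    rw [mem_range] at hi hj
    rcases lt_or_gt_of_ne hne with h | h
    · exact key i j h hj
    · exact (key j i h hi).symm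
  rw [Finset.card_biUnion hdisj]
  refine Finset.sum_congr rfl ?_
  intro i hi
  rw [mem_range] at hi
  have hiN : i + 1 < N := by omega
  have hik : i < k := lt_of_lt_of_le hi hk
  -- bijection with (k-i)-subsets of Icc 1 (N - 1 - i)
  have hI : (Finset.Icc (N - i + 1) N).card = i := by
    rw [Nat.card_Icc]; omega
  rw [show F i = (Finset.Icc 1 N).powerset.filter (fun A => A.card = k ∧
      N - i ∉ A ∧ Finset.Icc (N - i + 1) N ⊆ A) from rfl]
  rw [Finset.card_bij' (i := fun A _ => A \ Finset.Icc (N - i + 1) N)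
    (j := fun B _ => B ∪ Finset.Icc (N - i + 1) N)
    (t := (Finset.Icc 1 (N - 1 - i)).powerset.filter (fun B => B.card = k - i))
    ?_ ?_ ?_ ?_]
  · rw [← Finset.powersetCard_eq_filter, Finset.card_powersetCard, Nat.card_Icc]
    congr 1
  · -- maps into target
    intro A hA
    simp only [mem_filter, mem_powerset] at hA ⊢
    obtain ⟨hsub, hcard, hni, hIsub⟩ := hA
    constructor
    · intro a ha
      rw [mem_sdiff, mem_Icc] at ha
      have h1 := hsub ha.1
      rw [mem_Icc] at h1
      rw [mem_Icc]
      have : a ≠ N - i := fun h => hni (h ▸ ha.1)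
      omega
    · rw [Finset.card_sdiff_of_subset hIsub, hI, hcard]
  · -- inverse maps into source
    intro B hB
    simp only [mem_filter, mem_powerset] at hB ⊢
    obtain ⟨hsub, hcard⟩ := hB
    have hdisjBI : Disjoint B (Finset.Icc (N - i + 1) N) := by
      rw [Finset.disjoint_left]
      intro a ha ha'
      have := hsub ha
      rw [mem_Icc] at this ha'
      omega
    refine ⟨?_, ?_, ?_, Finset.subset_union_right⟩
    · intro a ha
      rw [mem_union] at ha
      rw [mem_Icc]
      rcases ha with h | h
      · have := hsub h; rw [mem_Icc] at this; omega
      · rw [mem_Icc] at h; omega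
    · rw [Finset.card_union_of_disjoint hdisjBI, hI, hcard]; omega
    · rw [mem_union, mem_Icc]
      push_neg
      refine ⟨fun h => ?_, by omega⟩
      have := hsub h; rw [mem_Icc] at this; omega
  · -- left inverse
    intro A hA
    simp only [mem_filter, mem_powerset] at hA
    exact Finset.sdiff_union_of_subset hA.2.2.2
  · -- right inverse
    intro B hB
    simp only [mem_filter, mem_powerset] at hB
    rw [Finset.union_sdiff_right, Finset.sdiff_eq_self_iff_disjoint]
    rw [Finset.disjoint_left]
    intro a ha ha'
    have := hB.1 ha
    rw [mem_Icc] at this ha'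
    omega

theorem stmt_6 (m r t ρ : ℕ) (hr : 1 ≤ r) (hρ1 : 1 ≤ ρ) (hρr : ρ ≤ r)
    (hm : r + t + 1 ≤ m) :
    (((Finset.Icc 1 m).powerset.filter (fun A => A.card = r ∧
        ∃ i ∈ Finset.range ρ, A ⊆ (Finset.Icc 1 (r + t + 1)).erase (r + t + 1 - i))).card
      = ∑ i ∈ Finset.range ρ, (r + t - i).choose (r - i)) ∧
    (((Finset.Icc 1 m).powerset.filter (fun A => r ≤ A.card ∧
        ∃ i ∈ Finset.range ρ, A ⊆ (Finset.Icc 1 (r + t + 1)).erase (r + t + 1 - i))).card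
      = ∑ j ∈ Finset.range (t + 1), ∑ i ∈ Finset.range ρ,
          (r + t - i).choose (r + j - i)) := by
  classical
  constructor
  · exact count_k m r t ρ r hρr hρr hm
  · have hset : (Finset.Icc 1 m).powerset.filter (fun A => r ≤ A.card ∧
        ∃ i ∈ Finset.range ρ, A ⊆ (Finset.Icc 1 (r + t + 1)).erase (r + t + 1 - i))
        = (Finset.range (t + 1)).biUnion (fun j =>
          (Finset.Icc 1 m).powerset.filter (fun A => A.card = r + j ∧
            ∃ i ∈ Finset.range ρ, A ⊆ (Finset.Icc 1 (r + t + 1)).erase (r + t + 1 - i))) := by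
      ext A
      simp only [mem_filter, mem_powerset, mem_biUnion, mem_range]
      constructor
      · rintro ⟨hsub, hcard, i, hi, hsubi⟩
        have hmem : r + t + 1 - i ∈ Finset.Icc 1 (r + t + 1) := by
          rw [mem_Icc]; omega
        have hle : A.card ≤ r + t := by
          have h1 := Finset.card_le_card hsubi
          rw [Finset.card_erase_of_mem hmem, Nat.card_Icc] at h1
          omega
        exact ⟨A.card - r, by omega, hsub, by omega, i, hi, hsubi⟩
      · rintro ⟨j, hj, hsub, hcard, i, hi, hsubi⟩
        exact ⟨hsub, by omega, i, hi, hsubi⟩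
    rw [hset, Finset.card_biUnion]
    · exact Finset.sum_congr rfl fun j _ =>
        count_k m r t ρ (r + j) hρr (by omega) hm
    · intro j hj j' hj' hne
      rw [Function.onFun, Finset.disjoint_left]
      rintro A hA hA'
      simp only [mem_filter] at hA hA'
      exact hne (by omega)
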